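/- Change of the h-polynomial under edge stellar subdivision: let K be a simplicial complex, e = {a,b} an edge of K, w a vertex not belonging to K, and n any integer with n ≥ dim K + 1. Then, in ℤ[t], h_n(sd_e(K))(t) = h_n(K)(t) + t·h_{n-2}(link_K(e))(t), where h_m(L)(t) = Σ_{i=0}^{m} f_{i-1}(L)·tⁱ·(1-t)^{m-i}. (Dual form of the proposition γ(P̃) = γ(P) + τ·γ(G) for a 2-truncation of a simple polytope along a codimension-2 face G.) -/

import Mathlib

open Polynomial
open scoped Classical

/-- A (finite) simplicial complex: a family of finite faces closed under subsets. -/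
def IsComplex {V : Type*} (K : Finset (Finset V)) : Prop :=
  ∀ F ∈ K, ∀ G ⊆ F, G ∈ K

/-- A flag simplicial complex: any set of vertices that is pairwise connected
by edges of `K` is a face of `K`. -/
def IsFlag {V : Type*} [DecidableEq V] (K : Finset (Finset V)) : Prop :=
  IsComplex K ∧ ∀ S : Finset V,
    (∀ v ∈ S, ({v} : Finset V) ∈ K) →
    (∀ u ∈ S, ∀ v ∈ S, u ≠ v → ({u, v} : Finset V) ∈ K) →
    S ∈ K

/-- The link of a face `σ` in `K`. -/
noncomputable def link {V : Type*} [DecidableEq V] (K : Finset (Finset V)) (σ : Finset V) :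
    Finset (Finset V) :=
  K.filter fun F => Disjoint F σ ∧ F ∪ σ ∈ K

/-- Stellar subdivision of `K` at the face `e` with (fresh) apex `w`:
`sd_e(K) = {F ∈ K : ¬(e ⊆ F)} ∪ {F ∪ S ∪ {w} : F ∈ link_K(e), S ⊊ e}`. -/
noncomputable def stellarSub {V : Type*} [DecidableEq V] (K : Finset (Finset V))
    (e : Finset V) (w : V) : Finset (Finset V) :=
  (K.filter fun F => ¬ e ⊆ F) ∪
    (link K e).biUnion fun F => e.ssubsets.image fun S => F ∪ S ∪ {w}

/-- The f-polynomial `f(K)(t) = Σ_{F ∈ K} t^|F| = Σ_i f_{i-1}(K) tⁱ`. -/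
noncomputable def fPoly {V : Type*} (K : Finset (Finset V)) : ℤ[X] :=
  ∑ F ∈ K, X ^ F.card

/-- The h-polynomial of rank `n`:
`h_n(K)(t) = Σ_{i=0}^{n} f_{i-1}(K) tⁱ (1-t)^{n-i} = Σ_{F ∈ K} t^|F| (1-t)^{n-|F|}`. -/
noncomputable def hPoly {V : Type*} (K : Finset (Finset V)) (n : ℕ) : ℤ[X] :=
  ∑ F ∈ K, X ^ F.card * (1 - X) ^ (n - F.card)

/-- `faceCount K i = f_{i-1}(K)`, the number of faces of `K` of cardinality `i`. -/
noncomputable def faceCount {V : Type*} (K : Finset (Finset V)) (i : ℕ) : ℕ :=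
  (K.filter fun F => F.card = i).card

/-- The boundary complex `∂♢ⁿ` of the `n`-dimensional cross-polytope, with
vertices `a_i = 2i`, `b_i = 2i+1` (`0 ≤ i < n`): all subsets containing at most
one of `a_i, b_i` for each `i`. -/
noncomputable def crossPolytopeBoundary (n : ℕ) : Finset (Finset ℕ) :=
  (Finset.range (2 * n)).powerset.filter fun F =>
    ∀ i < n, ¬ (2 * i ∈ F ∧ 2 * i + 1 ∈ F)

/-- Complexes obtained from `∂♢ⁿ` by a finite sequence of stellar subdivisions
at edges, each with a fresh apex vertex: the boundary complexes of duals of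
2-truncated `n`-cubes. -/
inductive TwoTruncated (n : ℕ) : Finset (Finset ℕ) → Prop
  | base : TwoTruncated n (crossPolytopeBoundary n)
  | step (K : Finset (Finset ℕ)) (a b w : ℕ) :
      TwoTruncated n K → a ≠ b → ({a, b} : Finset ℕ) ∈ K →
      (∀ F ∈ K, w ∉ F) →
      TwoTruncated n (stellarSub K {a, b} w)

/-- Change of the h-polynomial under edge stellar subdivision:
for any `n ≥ dim K + 1` (i.e. all faces of `K` have cardinality `≤ n`),
`h_n(sd_e(K))(t) = h_n(K)(t) + t · h_{n-2}(link_K(e))(t)`. -/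
theorem hPoly_stellarSub {V : Type*} [DecidableEq V] (K : Finset (Finset V)) (a b w : V)
    (n : ℕ) (hK : IsComplex K) (hab : a ≠ b) (he : ({a, b} : Finset V) ∈ K)
    (hw : ∀ F ∈ K, w ∉ F) (hn : ∀ F ∈ K, F.card ≤ n) :
    hPoly (stellarSub K {a, b} w) n =
      hPoly K n + X * hPoly (link K {a, b}) (n - 2) := by

  classical
  set e : Finset V := {a, b} with he_def
  have hwe : w ∉ e := hw e he
  have hcard_e : e.card = 2 := by
    rw [he_def, Finset.card_insert_of_notMem (by simpa using hab), Finset.card_singleton]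
  set f : Finset V → ℤ[X] := fun F => X ^ F.card * (1 - X) ^ (n - F.card) with hf_def
  -- link membership facts
  have hlinkmem : ∀ G, G ∈ link K e ↔ G ∈ K ∧ Disjoint G e ∧ G ∪ e ∈ K := by
    intro G; simp [link, Finset.mem_filter]
  have hlinkcard : ∀ G ∈ link K e, G.card + 2 ≤ n := by
    intro G hG
    obtain ⟨hGK, hd, hu⟩ := (hlinkmem G).mp hG
    have := hn _ hu
    rwa [Finset.card_union_of_disjoint hd, hcard_e] at this
  -- recovery lemmas
  have hrecG : ∀ (G S : Finset V), Disjoint G e → w ∉ G → S ⊆ e →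
      (G ∪ S ∪ {w}) \ (e ∪ {w}) = G := by
    intro G S hd hwG hSe
    ext x
    simp only [Finset.mem_sdiff, Finset.mem_union, Finset.mem_singleton]
    constructor
    · rintro ⟨(h | h) | h, hne⟩
      · exact h
      · exact absurd (Or.inl (hSe h)) hne
      · exact absurd (Or.inr h) hne
    · intro hx
      refine ⟨Or.inl (Or.inl hx), ?_⟩
      rintro (h | rfl)
      · exact Finset.disjoint_left.mp hd hx h
      · exact hwG hx
  have hrecS : ∀ (G S : Finset V), Disjoint G e → S ⊆ e → (G ∪ S ∪ {w}) ∩ e = S := by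
    intro G S hd hSe
    ext x
    simp only [Finset.mem_inter, Finset.mem_union, Finset.mem_singleton]
    constructor
    · rintro ⟨(h | h) | rfl, hxe⟩
      · exact absurd hxe (Finset.disjoint_left.mp hd h)
      · exact h
      · exact absurd hxe hwe
    · intro hx
      exact ⟨Or.inl (Or.inr hx), hSe hx⟩
  -- cardinality of new faces
  have hcardnew : ∀ (G S : Finset V), Disjoint G e → w ∉ G → S ⊆ e →
      (G ∪ S ∪ {w}).card = G.card + S.card + 1 := by
    intro G S hd hwG hSe
    have hdGS : Disjoint G S := hd.mono_right hSe
    have hdw : Disjoint (G ∪ S) ({w} : Finset V) := by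
      simp only [Finset.disjoint_singleton_right, Finset.mem_union]
      rintro (h | h)
      · exact hwG h
      · exact hwe (hSe h)
    rw [Finset.card_union_of_disjoint hdw, Finset.card_union_of_disjoint hdGS,
      Finset.card_singleton]
  -- the two parts of the stellar subdivision are disjoint
  have hwB : ∀ F ∈ (link K e).biUnion fun G => e.ssubsets.image fun S => G ∪ S ∪ {w}, w ∈ F := by
    intro F hF
    simp only [Finset.mem_biUnion, Finset.mem_image] at hF
    obtain ⟨G, hG, S, hS, rfl⟩ := hF
    simp
  have hdisjAB : Disjoint (K.filter fun F => ¬ e ⊆ F)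
      ((link K e).biUnion fun G => e.ssubsets.image fun S => G ∪ S ∪ {w}) := by
    rw [Finset.disjoint_left]
    intro F hF hF'
    exact hw F (Finset.mem_filter.mp hF).1 (hwB F hF')
  -- pairwise disjointness for the biUnion
  have hpd : Set.PairwiseDisjoint (↑(link K e))
      fun G => e.ssubsets.image fun S => G ∪ S ∪ {w} := by
    intro G hG G' hG' hne
    simp only [Finset.coe_mem, Function.onFun] at *
    rw [Finset.disjoint_left]
    intro F hF hF'
    simp only [Finset.mem_image, Finset.mem_ssubsets] at hF hF'
    obtain ⟨S, hS, rfl⟩ := hF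
    obtain ⟨S', hS', hEq⟩ := hF'
    obtain ⟨_, hd, _⟩ := (hlinkmem G).mp hG
    obtain ⟨hG'K, hd', _⟩ := (hlinkmem G').mp hG'
    apply hne
    calc G = (G ∪ S ∪ {w}) \ (e ∪ {w}) := (hrecG G S hd (hw G ((hlinkmem G).mp hG).1) hS.subset).symm
    _ = (G' ∪ S' ∪ {w}) \ (e ∪ {w}) := by rw [hEq]
    _ = G' := hrecG G' S' hd' (hw G' hG'K) hS'.subset
  -- sum over the subdivided faces that contain e, via the bijection with the link
  have hbij : ∑ F ∈ K.filter (fun F => e ⊆ F), f F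
      = ∑ G ∈ link K e, X ^ (G.card + 2) * (1 - X) ^ (n - (G.card + 2)) := by
    refine Finset.sum_nbij' (fun F => F \ e) (fun G => G ∪ e) ?_ ?_ ?_ ?_ ?_
    · intro F hF
      obtain ⟨hFK, hFe⟩ := Finset.mem_filter.mp hF
      rw [hlinkmem]
      exact ⟨hK F hFK _ (Finset.sdiff_subset), Finset.sdiff_disjoint,
        by rwa [Finset.sdiff_union_of_subset hFe]⟩
    · intro G hG
      obtain ⟨hGK, hd, hu⟩ := (hlinkmem G).mp hG
      exact Finset.mem_filter.mpr ⟨hu, Finset.subset_union_right⟩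
    · intro F hF
      exact Finset.sdiff_union_of_subset (Finset.mem_filter.mp hF).2
    · intro G hG
      exact Finset.union_sdiff_cancel_right ((hlinkmem G).mp hG).2.1
    · intro F hF
      obtain ⟨hFK, hFe⟩ := Finset.mem_filter.mp hF
      have : (F \ e).card + 2 = F.card := by
        rw [Finset.card_sdiff_of_subset hFe, hcard_e]
        have := Finset.card_le_card hFe
        omega
      rw [hf_def]; simp only [← this]
  -- computation of ssubsets of e
  have hsubpair : ∀ S : Finset V, S ⊆ e → S = ∅ ∨ S = {a} ∨ S = {b} ∨ S = e := by
    intro S hS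
    by_cases ha : a ∈ S <;> by_cases hb : b ∈ S
    · refine Or.inr (Or.inr (Or.inr (Finset.Subset.antisymm hS ?_)))
      intro x hx
      rw [he_def, Finset.mem_insert, Finset.mem_singleton] at hx
      rcases hx with rfl | rfl
      · exact ha
      · exact hb
    · refine Or.inr (Or.inl ?_)
      ext x
      rw [Finset.mem_singleton]
      constructor
      · intro hx
        have := hS hx
        rw [he_def, Finset.mem_insert, Finset.mem_singleton] at this
        rcases this with rfl | rfl
        · rfl
        · exact absurd hx hb
      · rintro rfl; exact ha
    · refine Or.inr (Or.inr (Or.inl ?_))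
      ext x
      rw [Finset.mem_singleton]
      constructor
      · intro hx
        have := hS hx
        rw [he_def, Finset.mem_insert, Finset.mem_singleton] at this
        rcases this with rfl | rfl
        · exact absurd hx ha
        · rfl
      · rintro rfl; exact hb
    · refine Or.inl (Finset.eq_empty_of_forall_notMem ?_)
      intro x hx
      have := hS hx
      rw [he_def, Finset.mem_insert, Finset.mem_singleton] at this
      rcases this with rfl | rfl
      · exact ha hx
      · exact hb hx
  have hss : e.ssubsets = {∅, {a}, {b}} := by
    ext S
    rw [Finset.mem_ssubsets]
    simp only [Finset.mem_insert, Finset.mem_singleton]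
    constructor
    · intro h
      rcases hsubpair S h.subset with rfl | rfl | rfl | rfl
      · exact Or.inl rfl
      · exact Or.inr (Or.inl rfl)
      · exact Or.inr (Or.inr rfl)
      · exact absurd rfl h.ne
    · have hane : ({a} : Finset V) ≠ e := by
        intro h
        have : ({a} : Finset V).card = 2 := by rw [h, hcard_e]
        simp at this
      have hbne : ({b} : Finset V) ≠ e := by
        intro h
        have : ({b} : Finset V).card = 2 := by rw [h, hcard_e]
        simp at this
      rintro (rfl | rfl | rfl)
      · refine Finset.ssubset_iff_subset_ne.mpr ⟨Finset.empty_subset _, ?_⟩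
        intro h
        rw [← h] at hcard_e
        simp at hcard_e
      · exact Finset.ssubset_iff_subset_ne.mpr
          ⟨by rw [he_def]; exact Finset.singleton_subset_iff.mpr (Finset.mem_insert_self a _), hane⟩
      · exact Finset.ssubset_iff_subset_ne.mpr
          ⟨by rw [he_def]; exact Finset.singleton_subset_iff.mpr (by simp), hbne⟩
  -- sum over new faces
  have hB : ∑ G ∈ link K e, ∑ F ∈ e.ssubsets.image (fun S => G ∪ S ∪ {w}), f F
      = ∑ G ∈ link K e,
          (X ^ (G.card + 2) * (1 - X) ^ (n - (G.card + 2))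
            + X * (X ^ G.card * (1 - X) ^ (n - 2 - G.card))) := by
    refine Finset.sum_congr rfl ?_
    intro G hG
    obtain ⟨hGK, hd, hu⟩ := (hlinkmem G).mp hG
    have hwG : w ∉ G := hw G hGK
    have hcard2 : G.card + 2 ≤ n := hlinkcard G hG
    rw [Finset.sum_image]
    swap
    · intro S hS S' hS' hEq
      rw [Finset.mem_coe, Finset.mem_ssubsets] at hS hS'
      calc S = (G ∪ S ∪ {w}) ∩ e := (hrecS G S hd hS.subset).symm
      _ = (G ∪ S' ∪ {w}) ∩ e := by rw [show G ∪ S ∪ {w} = G ∪ S' ∪ {w} from hEq]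
      _ = S' := hrecS G S' hd hS'.subset
    have hterm : ∀ S ∈ e.ssubsets, f (G ∪ S ∪ {w})
        = X ^ (G.card + S.card + 1) * (1 - X) ^ (n - (G.card + S.card + 1)) := by
      intro S hS
      rw [Finset.mem_ssubsets] at hS
      rw [hf_def]
      simp only [hcardnew G S hd hwG hS.subset]
    rw [Finset.sum_congr rfl hterm, hss]
    have h0 : (∅ : Finset V) ∉ ({{a}, {b}} : Finset (Finset V)) := by
      simp only [Finset.mem_insert, Finset.mem_singleton, not_or]
      exact ⟨fun h => Finset.singleton_ne_empty a h.symm, fun h => Finset.singleton_ne_empty b h.symm⟩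
    have h1 : ({a} : Finset V) ∉ ({{b}} : Finset (Finset V)) := by
      simp [Finset.singleton_inj, hab]
    rw [Finset.sum_insert h0, Finset.sum_insert h1, Finset.sum_singleton]
    simp only [Finset.card_empty, Finset.card_singleton]
    set g := G.card
    have e1 : n - (g + 0 + 1) = (n - g - 2) + 1 := by omega
    have e2 : n - (g + 1 + 1) = n - g - 2 := by omega
    have e3 : n - 2 - g = n - g - 2 := by omega
    have e4 : n - (g + 2) = n - g - 2 := by omega
    rw [e1, e2, e3]
    ring
  -- put everything together
  rw [hPoly, hPoly, hPoly, stellarSub]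
  show ∑ F ∈ _, f F = (∑ F ∈ K, f F) + X * ∑ G ∈ link K e,
    X ^ G.card * (1 - X) ^ (n - 2 - G.card)
  rw [Finset.sum_union hdisjAB, Finset.sum_biUnion hpd]
  have hsplit : ∑ F ∈ K.filter (fun F => ¬ e ⊆ F), f F
      = (∑ F ∈ K, f F) - ∑ F ∈ K.filter (fun F => e ⊆ F), f F := by
    rw [← Finset.sum_filter_add_sum_filter_not K (fun F => e ⊆ F) f]
    ring
  rw [hsplit, hbij, hB, Finset.sum_add_distrib, Finset.mul_sum]
  ring
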